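/- Let W be a (1,2)-symmetric Z/m × Z/n-graded twisted C-algebra with standard basis and structure constant C, with generators a of Z/m and b of Z/n. Then C(a,b)^{mn} = 1. -/

import Mathlib

/-- `(1,2)`-symmetry of the associator: `r(a,b,c) = r(b,a,c)` for all `a,b,c`. -/
def Sym12 {G : Type*} [CommGroup G] (C : G → G → ℂˣ) : Prop :=
  ∀ a b c : G,
    C b c * (C (a * b) c)⁻¹ * C a (b * c) * (C a b)⁻¹ =
      C a c * (C (b * a) c)⁻¹ * C b (a * c) * (C b a)⁻¹

/-- let `W` be a `(1,2)`-symmetric `ℤ/m × ℤ/n`-graded twisted ℂ-algebra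
with structure constant `C` relative to a standard basis, where `a`, `b` are the chosen
generators of `ℤ/m`, `ℤ/n`. Standardness means: `C(1,x) = C(x,1) = 1`; the first column
is a standard cyclic basis, i.e. `C(a, aⁱ) = 1` for all `i`; the rows are generated by
`b`, i.e. `C(b, aⁱ bˢ) = 1` for `s = 0, …, n-2`; and the first row is a standard cyclic
basis, i.e. also `C(b, b^{n-1}) = 1`.  Then `C(a,b)^{mn} = 1`. -/
theorem stmt16 (m n : ℕ) (hm : 0 < m) (hn : 0 < n)
    (C : (Multiplicative (ZMod m) × Multiplicative (ZMod n)) →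
         (Multiplicative (ZMod m) × Multiplicative (ZMod n)) → ℂˣ)
    (a : Multiplicative (ZMod m) × Multiplicative (ZMod n))
    (b : Multiplicative (ZMod m) × Multiplicative (ZMod n))
    (ha : a = (Multiplicative.ofAdd (1 : ZMod m), 1))
    (hb : b = (1, Multiplicative.ofAdd (1 : ZMod n)))
    (hsym : Sym12 C)
    (hunit : ∀ x, C 1 x = 1 ∧ C x 1 = 1)
    (hcol : ∀ i : ℕ, C a (a ^ i) = 1)
    (hrow : ∀ i s : ℕ, s < n - 1 → C b (a ^ i * b ^ s) = 1)
    (hwrap : C b (b ^ (n - 1)) = 1) :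
    C a b ^ (m * n) = 1 := by
  -- powers of the generators vanish
  have hbn : b ^ n = 1 := by
    rw [hb, Prod.pow_mk, one_pow, ← ofAdd_nsmul]
    simp [nsmul_eq_mul]
  have ham : a ^ m = 1 := by
    rw [ha, Prod.pow_mk, one_pow, ← ofAdd_nsmul]
    simp [nsmul_eq_mul]
  -- C b a = 1
  have hba : C b a = 1 := by
    rcases Nat.lt_or_ge n 2 with h1 | h2
    · obtain rfl : n = 1 := by omega
      have hb1 : b = 1 := by
        rw [hb]
        exact Prod.ext rfl (Subsingleton.elim _ _)
      rw [hb1]; exact (hunit a).1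
    · simpa using hrow 1 0 (by omega)
  have cne : ∀ x y, (C x y : ℂ) ≠ 0 := fun x y => (C x y).ne_zero
  set q : ℂ := (C a b : ℂ) with hq
  -- key relation in ℂ
  have key : ∀ z, (C b z : ℂ) * (C a (b * z) : ℂ) =
      (C a z : ℂ) * (C b (a * z) : ℂ) * q := by
    intro z
    have E := congrArg (Units.val) (hsym a b z)
    rw [mul_comm b a] at E
    push_cast at E
    rw [hba] at E
    push_cast at E
    field_simp at E
    apply mul_right_cancel₀ (cne (a * b) z)
    linear_combination (C (a * b) z : ℂ) * E
  -- column values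
  have g : ∀ i s : ℕ, s + 1 ≤ n → (C a (a ^ i * b ^ s) : ℂ) = q ^ s := by
    intro i s
    induction s with
    | zero => intro _; rw [pow_zero, mul_one, pow_zero, hcol i, Units.val_one]
    | succ s ih =>
      intro hs
      have h1 : s < n - 1 := by omega
      have e := key (a ^ i * b ^ s)
      have e1 : b * (a ^ i * b ^ s) = a ^ i * b ^ (s + 1) := by
        rw [pow_succ]
        simp [mul_comm, mul_left_comm, mul_assoc]
      have e2 : a * (a ^ i * b ^ s) = a ^ (i + 1) * b ^ s := by
        rw [pow_succ]
        simp [mul_comm, mul_left_comm, mul_assoc]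
      rw [e1, e2, hrow i s h1, hrow (i + 1) s h1, ih (by omega)] at e
      push_cast at e
      rw [pow_succ q s]
      linear_combination e
  -- row recursion
  have h : ∀ i : ℕ, (C b (a ^ i * b ^ (n - 1)) : ℂ) * q ^ (n * i) = 1 := by
    intro i
    induction i with
    | zero => simp [hwrap]
    | succ i ih =>
      have e := key (a ^ i * b ^ (n - 1))
      have e1 : b * (a ^ i * b ^ (n - 1)) = a ^ i := by
        have : b * b ^ (n - 1) = 1 := by
          rw [← pow_succ']
          have : n - 1 + 1 = n := by omega
          rw [this, hbn]
        calc b * (a ^ i * b ^ (n - 1)) = a ^ i * (b * b ^ (n - 1)) := by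
              simp [mul_comm, mul_left_comm, mul_assoc]
          _ = a ^ i := by rw [this, mul_one]
      have e2 : a * (a ^ i * b ^ (n - 1)) = a ^ (i + 1) * b ^ (n - 1) := by
        rw [pow_succ]
        simp [mul_comm, mul_left_comm, mul_assoc]
      rw [e1, e2, hcol i, g i (n - 1) (by omega)] at e
      push_cast at e
      have hq1 : q ^ (n - 1) * q * q ^ (n * i) = q ^ (n * (i + 1)) := by
        rw [← pow_succ, ← pow_add]
        congr 1
        rw [Nat.mul_succ]
        omega
      rw [← hq1]
      linear_combination ih - q ^ (n * i) * e
  have hfin := h m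
  rw [ham, one_mul, hwrap] at hfin
  push_cast at hfin
  rw [one_mul] at hfin
  apply Units.ext
  push_cast
  rw [mul_comm]
  exact hfin
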